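/- Let n ≥ 3, U₁,…,Uₙ closed subspaces of X with Z = ∩U_i, T the Malitsky–Tam operator on X^{n−1}, 0 < λ < 1, and z_{k+1} = (1−λ)z_k + λT z_k starting from z₀ = (z_{0,1},…,z_{0,n−1}). Then z_k converges strongly to P_{Fix T}(z₀) and P₁(Q₁ z_k) → P_Z((z_{0,1}+⋯+z_{0,n−1})/(n−1)) strongly. In particular, if z₀ = (x₀,…,x₀), then P₁(Q₁ z_k) → P_Z(x₀). -/

import Mathlib

open Filter

variable {X : Type*} [NormedAddCommGroup X] [InnerProductSpace ℝ X] [CompleteSpace X]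

/-- The orthogonal projection onto a subspace, as a map `X → X`. -/
noncomputable def pr (U : Submodule ℝ X) [U.HasOrthogonalProjection] (x : X) : X :=
  U.orthogonalProjectionOnto x

/-- Extension of a tuple in `X^m` to an `ℕ`-indexed family (by zero). -/
noncomputable def extz {m : ℕ} (z : PiLp 2 (fun _ : Fin m => X)) : ℕ → X :=
  fun i => if h : i < m then z ⟨i, h⟩ else 0

/-- The auxiliary sequence `x₁, …, xₙ` of the Malitsky–Tam operator (0-based indexing):
`x 0 = P₀ (z 0)`, `x i = Pᵢ (x (i−1) + z i − z (i−1))` for `1 ≤ i ≤ n − 2`, and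
`x (n−1) = P_{n−1} (x 0 + x (n−2) − z (n−2))`. -/
noncomputable def mtX (n : ℕ) (U : ℕ → Submodule ℝ X) [∀ i, (U i).HasOrthogonalProjection]
    (z : ℕ → X) : ℕ → X
  | 0 => pr (U 0) (z 0)
  | (i + 1) =>
      if i + 1 ≤ n - 2 then pr (U (i + 1)) (mtX n U z i + z (i + 1) - z i)
      else if i + 1 = n - 1 then pr (U (n - 1)) (mtX n U z 0 + mtX n U z i - z i)
      else 0

/-- The Malitsky–Tam operator `T z = z + (x₂ − x₁, …, xₙ − x_{n−1})` on `X^{n−1}`. -/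
noncomputable def mtT (n : ℕ) (U : ℕ → Submodule ℝ X) [∀ i, (U i).HasOrthogonalProjection]
    (z : PiLp 2 (fun _ : Fin (n - 1) => X)) : PiLp 2 (fun _ : Fin (n - 1) => X) :=
  (WithLp.equiv 2 (∀ _ : Fin (n - 1), X)).symm fun j =>
    z j + (mtX n U (extz z) ((j : ℕ) + 1) - mtX n U (extz z) (j : ℕ))

/-- The diagonal embedding `X → X^m`, `x ↦ (x, …, x)`, as a linear map into `ℓ²`-product. -/
noncomputable def diagMap (m : ℕ) (X : Type*) [NormedAddCommGroup X]
    [InnerProductSpace ℝ X] : X →ₗ[ℝ] PiLp 2 (fun _ : Fin m => X) :=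
  (WithLp.linearEquiv 2 ℝ (∀ _ : Fin m, X)).symm.toLinearMap ∘ₗ
    LinearMap.pi fun _ => LinearMap.id

/-- The partial-sum operator `(y₁, …, y_m) ↦ (y₁, y₁ + y₂, …, y₁ + ⋯ + y_m)` on `X^m`. -/
noncomputable def psumL (m : ℕ) (X : Type*) [NormedAddCommGroup X]
    [InnerProductSpace ℝ X] :
    PiLp 2 (fun _ : Fin m => X) →ₗ[ℝ] PiLp 2 (fun _ : Fin m => X) :=
  (WithLp.linearEquiv 2 ℝ (∀ _ : Fin m, X)).symm.toLinearMap ∘ₗ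
    (LinearMap.pi fun j : Fin m =>
      ∑ i ∈ Finset.univ.filter (fun i : Fin m => i ≤ j), LinearMap.proj i) ∘ₗ
    (WithLp.linearEquiv 2 ℝ (∀ _ : Fin m, X)).toLinearMap

/-- The range of the partial-sum operator `Ψ` restricted to `U₁^⊥ × ⋯ × U_m^⊥`. -/
noncomputable def ranPsi (m : ℕ) (U : ℕ → Submodule ℝ X) :
    Submodule ℝ (PiLp 2 (fun _ : Fin m => X)) :=
  Submodule.map (psumL m X)
    (Submodule.comap (WithLp.linearEquiv 2 ℝ (∀ _ : Fin m, X)).toLinearMap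
      (Submodule.pi Set.univ fun j : Fin m => (U (j : ℕ))ᗮ))

set_option linter.unusedSectionVars false
set_option synthInstance.maxHeartbeats 1000000
set_option maxHeartbeats 1000000

local notation "⟪" x ", " y "⟫" => @inner ℝ _ _ x y

section KM
variable {E : Type*} [NormedAddCommGroup E] [InnerProductSpace ℝ E] [CompleteSpace E]

lemma avg_norm_identity (lam : ℝ) (a b : E) :
    ‖(1 - lam) • a + lam • b‖ ^ 2 =
      (1 - lam) * ‖a‖ ^ 2 + lam * ‖b‖ ^ 2 - lam * (1 - lam) * ‖a - b‖ ^ 2 := by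
  simp only [← real_inner_self_eq_norm_sq]
  simp only [inner_add_add_self, inner_sub_sub_self, real_inner_smul_left,
    real_inner_smul_right, real_inner_comm a b]
  ring

lemma km_key (N : E →L[ℝ] E) (hN : ∀ z : E, ‖N z‖ ≤ ‖z‖) {lam : ℝ}
    (h0 : 0 < lam) (h1 : lam < 1) (z : E) :
    ‖(1 - lam) • z + lam • N z‖ ^ 2 + lam * (1 - lam) * ‖z - N z‖ ^ 2 ≤ ‖z‖ ^ 2 := by
  have e := avg_norm_identity lam z (N z)
  have h2 : ‖N z‖ ^ 2 ≤ ‖z‖ ^ 2 := by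
    have := hN z
    nlinarith [norm_nonneg (N z), norm_nonneg z]
  nlinarith

end KM

section KM2
set_option linter.unusedSectionVars false
set_option synthInstance.maxHeartbeats 1000000
set_option maxHeartbeats 1000000
variable {E : Type*} [NormedAddCommGroup E] [InnerProductSpace ℝ E] [CompleteSpace E]

variable (N : E →L[ℝ] E)

/-- The relaxed operator as a continuous linear map. -/
noncomputable def Tl (lam : ℝ) : E →L[ℝ] E := (1 - lam) • ContinuousLinearMap.id ℝ E + lam • N

lemma Tl_apply (lam : ℝ) (z : E) : Tl N lam z = (1 - lam) • z + lam • N z := by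
  simp [Tl]

lemma Tl_norm_le (hN : ∀ z : E, ‖N z‖ ≤ ‖z‖) {lam : ℝ} (h0 : 0 < lam) (h1 : lam < 1)
    (z : E) : ‖Tl N lam z‖ ≤ ‖z‖ := by
  have := km_key N hN h0 h1 z
  rw [Tl_apply]
  have hnn : (0:ℝ) ≤ lam * (1 - lam) * ‖z - N z‖ ^ 2 :=
    mul_nonneg (mul_nonneg h0.le (by linarith)) (sq_nonneg _)
  have h2 : ‖(1 - lam) • z + lam • N z‖ ^ 2 ≤ ‖z‖ ^ 2 := by linarith
  nlinarith [norm_nonneg ((1 - lam) • z + lam • N z), norm_nonneg z]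

lemma Tl_pow_norm_le (hN : ∀ z : E, ‖N z‖ ≤ ‖z‖) {lam : ℝ} (h0 : 0 < lam) (h1 : lam < 1)
    (k : ℕ) (z : E) : ‖(Tl N lam ^ k) z‖ ≤ ‖z‖ := by
  induction k with
  | zero => simp
  | succ k ih =>
    rw [pow_succ', ContinuousLinearMap.mul_apply]
    exact (Tl_norm_le N hN h0 h1 _).trans ih
    
lemma Tl_comm (lam : ℝ) (z : E) : Tl N lam (N z) = N (Tl N lam z) := by
  simp [Tl_apply, map_add, map_smul]

lemma Tl_pow_comm (lam : ℝ) (k : ℕ) (z : E) :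
    (Tl N lam ^ k) (N z) = N ((Tl N lam ^ k) z) := by
  induction k with
  | zero => simp
  | succ k ih => rw [pow_succ', ContinuousLinearMap.mul_apply, ContinuousLinearMap.mul_apply,
      ih, Tl_comm]

lemma km_asympt (hN : ∀ z : E, ‖N z‖ ≤ ‖z‖) {lam : ℝ} (h0 : 0 < lam) (h1 : lam < 1)
    (z₀ : E) :
    Tendsto (fun k => (Tl N lam ^ k) z₀ - N ((Tl N lam ^ k) z₀)) atTop (nhds 0) := by
  set w : ℕ → E := fun k => (Tl N lam ^ k) z₀ with hw
  have hsum : ∀ K : ℕ, ∑ k ∈ Finset.range K, lam * (1 - lam) * ‖w k - N (w k)‖ ^ 2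
      ≤ ‖z₀‖ ^ 2 := by
    intro K
    have key : ∀ K : ℕ, ∑ k ∈ Finset.range K, lam * (1 - lam) * ‖w k - N (w k)‖ ^ 2
        + ‖w K‖ ^ 2 ≤ ‖z₀‖ ^ 2 := by
      intro K
      induction K with
      | zero => simp [w]
      | succ K ih =>
        rw [Finset.sum_range_succ]
        have h2 : w (K + 1) = (1 - lam) • w K + lam • N (w K) := by
          simp only [hw, pow_succ', ContinuousLinearMap.mul_apply]
          exact Tl_apply N lam _
        have := km_key N hN h0 h1 (w K)
        rw [h2]
        linarith
    have := key K
    nlinarith [sq_nonneg ‖w K‖]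
  have hc : (0:ℝ) < lam * (1 - lam) := by nlinarith
  have hsummable : Summable (fun k => lam * (1 - lam) * ‖w k - N (w k)‖ ^ 2) := by
    apply summable_of_sum_range_le (c := ‖z₀‖ ^ 2)
    · intro k; exact mul_nonneg hc.le (sq_nonneg _)
    · exact hsum
  have h0' : Tendsto (fun k => lam * (1 - lam) * ‖w k - N (w k)‖ ^ 2) atTop (nhds 0) :=
    hsummable.tendsto_atTop_zero
  have h1' : Tendsto (fun k => ‖w k - N (w k)‖ ^ 2) atTop (nhds 0) := by
    have ht := h0'.const_mul (lam * (1 - lam))⁻¹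
    have heq : ∀ k : ℕ, (lam * (1 - lam))⁻¹ * (lam * (1 - lam) * ‖w k - N (w k)‖ ^ 2)
        = ‖w k - N (w k)‖ ^ 2 := by
      intro k; rw [← mul_assoc, inv_mul_cancel₀ hc.ne', one_mul]
    simp only [heq] at ht
    simpa using ht
  have h2' : Tendsto (fun k => ‖w k - N (w k)‖) atTop (nhds 0) := by
    have := h1'.sqrt
    simpa [Real.sqrt_sq (norm_nonneg _)] using this
  exact tendsto_zero_iff_norm_tendsto_zero.2 h2'

theorem km_tendsto (hN : ∀ z : E, ‖N z‖ ≤ ‖z‖) {lam : ℝ} (h0 : 0 < lam) (h1 : lam < 1)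
    (z₀ : E) {K : Submodule ℝ E} (hK : K = LinearMap.ker ((ContinuousLinearMap.id ℝ E - N : E →L[ℝ] E) : E →ₗ[ℝ] E))
    [K.HasOrthogonalProjection] :
    Tendsto (fun k => (Tl N lam ^ k) z₀) atTop (nhds (Submodule.orthogonalProjectionOnto K z₀)) := by
  have hKmem : ∀ x : E, x ∈ K ↔ N x = x := by
    intro x
    rw [hK, LinearMap.mem_ker]
    constructor
    · intro h
      have h' : x - N x = 0 := by simpa using h
      linear_combination (norm := abel) -h'
    · intro h; simp [h]
  have hTlfix : ∀ x : E, x ∈ K → Tl N lam x = x := by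
    intro x hx
    rw [Tl_apply, (hKmem x).1 hx]
    module
  have hTlpowfix : ∀ k (x : E), x ∈ K → (Tl N lam ^ k) x = x := by
    intro k x hx
    induction k with
    | zero => simp
    | succ k ih => rw [pow_succ, ContinuousLinearMap.mul_apply, hTlfix x hx, ih]
  set S : Submodule ℝ E := LinearMap.range ((ContinuousLinearMap.id ℝ E - N) : E →ₗ[ℝ] E)
    with hS
  have hSorth : Sᗮ ≤ K := by
    intro x hx
    rw [hKmem]
    have hadj : ContinuousLinearMap.adjoint N x = x := by
      apply ext_inner_left ℝ
      intro z
      rw [ContinuousLinearMap.adjoint_inner_right]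
      have hz : ⟪z - N z, x⟫ = 0 := hx (z - N z) ⟨z, rfl⟩
      rw [inner_sub_left] at hz
      linarith
    have hinner : ⟪N x, x⟫ = ‖x‖ ^ 2 := by
      rw [real_inner_comm]
      have := ContinuousLinearMap.adjoint_inner_left N x x
      rw [hadj] at this
      rw [← this, real_inner_self_eq_norm_sq]
    have hle : ‖N x - x‖ ^ 2 ≤ 0 := by
      rw [norm_sub_sq_real, hinner]
      have h2 : ‖N x‖ ^ 2 ≤ ‖x‖ ^ 2 := by
        have := hN x
        nlinarith [norm_nonneg (N x), norm_nonneg x]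
      linarith
    have : N x - x = 0 := by
      have := sq_nonneg ‖N x - x‖
      have hz : ‖N x - x‖ ^ 2 = 0 := le_antisymm hle this
      have : ‖N x - x‖ = 0 := by nlinarith [norm_nonneg (N x - x)]
      exact norm_eq_zero.1 this
    linear_combination (norm := abel) this
  have hclos : Kᗮ ≤ S.topologicalClosure := by
    rw [← Submodule.orthogonal_orthogonal_eq_closure]
    exact Submodule.orthogonal_le hSorth
  -- convergence to zero on range S
  have hran : ∀ y ∈ S, Tendsto (fun k => (Tl N lam ^ k) y) atTop (nhds 0) := by
    rintro y ⟨z, rfl⟩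
    have heq : ∀ k : ℕ, (Tl N lam ^ k) ((ContinuousLinearMap.id ℝ E - N) z)
        = (Tl N lam ^ k) z - N ((Tl N lam ^ k) z) := by
      intro k
      have : (ContinuousLinearMap.id ℝ E - N) z = z - N z := by simp
      rw [this, map_sub, Tl_pow_comm]
    exact Tendsto.congr (fun k => (heq k).symm) (km_asympt N hN h0 h1 z)
  -- extend to closure by density
  have hclosconv : ∀ y ∈ S.topologicalClosure, Tendsto (fun k => (Tl N lam ^ k) y) atTop (nhds 0) := by
    intro y hy
    rw [tendsto_zero_iff_norm_tendsto_zero]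
    rw [NormedAddCommGroup.tendsto_atTop]
    intro ε hε
    have hyd : y ∈ closure (S : Set E) := hy
    rw [Metric.mem_closure_iff] at hyd
    obtain ⟨y', hy', hdist⟩ := hyd (ε / 2) (by linarith)
    obtain ⟨K0, hK0⟩ := (NormedAddCommGroup.tendsto_atTop.1
      (tendsto_zero_iff_norm_tendsto_zero.1 (hran y' hy'))) (ε / 2) (by linarith)
    refine ⟨K0, fun k hk => ?_⟩
    have h1' : ‖(Tl N lam ^ k) y - (Tl N lam ^ k) y'‖ ≤ ‖y - y'‖ := by
      rw [← map_sub]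
      exact Tl_pow_norm_le N hN h0 h1 k _
    have h2' := hK0 k hk
    rw [sub_zero] at h2' ⊢
    rw [Real.norm_of_nonneg (norm_nonneg _)] at h2' ⊢
    have : ‖(Tl N lam ^ k) y‖ ≤ ‖(Tl N lam ^ k) y - (Tl N lam ^ k) y'‖ + ‖(Tl N lam ^ k) y'‖ := by
      simpa using norm_add_le ((Tl N lam ^ k) y - (Tl N lam ^ k) y') ((Tl N lam ^ k) y')
    have hyd' : ‖y - y'‖ < ε / 2 := by
      rw [← dist_eq_norm]; exact hdist
    calc ‖(Tl N lam ^ k) y‖ ≤ _ + _ := this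
      _ < ε := by linarith [h1'.trans_lt hyd', h2']
  -- assemble
  have hdecomp : z₀ = (Submodule.orthogonalProjectionOnto K z₀ : E) + (z₀ - Submodule.orthogonalProjectionOnto K z₀) := by abel
  have hyK : (z₀ - Submodule.orthogonalProjectionOnto K z₀ : E) ∈ Kᗮ := Submodule.sub_starProjection_mem_orthogonal z₀
  have hconv := hclosconv _ (hclos hyK)
  have : ∀ k : ℕ, (Tl N lam ^ k) z₀
      = (Submodule.orthogonalProjectionOnto K z₀ : E) + (Tl N lam ^ k) (z₀ - Submodule.orthogonalProjectionOnto K z₀) := by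
    intro k
    conv_lhs => rw [hdecomp]
    rw [map_add, hTlpowfix k _ (Submodule.orthogonalProjectionOnto K z₀).2]
  rw [show (Submodule.orthogonalProjectionOnto K z₀ : E) = (Submodule.orthogonalProjectionOnto K z₀ : E) + 0 by abel]
  exact Tendsto.congr (fun k => (this k).symm) (tendsto_const_nhds.add hconv)

end KM2

section MT

variable (n : ℕ) (U : ℕ → Submodule ℝ X) [∀ i, (U i).HasOrthogonalProjection]

lemma pr_mem (U' : Submodule ℝ X) [U'.HasOrthogonalProjection] (v : X) : pr U' v ∈ U' :=
  (Submodule.orthogonalProjectionOnto U' v).2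

lemma sub_pr_mem_orth (U' : Submodule ℝ X) [U'.HasOrthogonalProjection] (v : X) :
    v - pr U' v ∈ U'ᗮ := Submodule.sub_starProjection_mem_orthogonal v

lemma pyth (p w b : X) (h : ⟪p, w⟫ = 0) :
    ‖b - w‖ ^ 2 + ‖b - p‖ ^ 2 = ‖b‖ ^ 2 + ‖b - (p + w)‖ ^ 2 := by
  simp only [← real_inner_self_eq_norm_sq]
  simp only [inner_sub_sub_self, inner_add_add_self, inner_sub_left, inner_sub_right,
    inner_add_left, inner_add_right]
  have h' : ⟪w, p⟫ = 0 := by rw [real_inner_comm]; exact h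
  rw [h, h']
  ring

lemma proj_pyth (U' : Submodule ℝ X) [U'.HasOrthogonalProjection] (v b : X) :
    ‖b - (v - pr U' v)‖ ^ 2 + ‖b - pr U' v‖ ^ 2 = ‖b‖ ^ 2 + ‖b - v‖ ^ 2 := by
  have h : ⟪pr U' v, v - pr U' v⟫ = 0 :=
    Submodule.inner_right_of_mem_orthogonal (pr_mem U' v) (sub_pr_mem_orth U' v)
  have := pyth (pr U' v) (v - pr U' v) b h
  rwa [add_sub_cancel] at this

-- formulas for mtX
lemma mtX_zero (z : ℕ → X) : mtX n U z 0 = pr (U 0) (z 0) := by rw [mtX]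

lemma mtX_mid (z : ℕ → X) (i : ℕ) (h : i + 1 ≤ n - 2) :
    mtX n U z (i + 1) = pr (U (i + 1)) (mtX n U z i + z (i + 1) - z i) := by
  rw [mtX, if_pos h]

lemma mtX_last' (hn : 3 ≤ n) (z : ℕ → X) (i : ℕ) (h1 : i + 1 = n - 1) :
    mtX n U z (i + 1) = pr (U (i + 1)) (mtX n U z 0 + mtX n U z i - z i) := by
  conv_lhs => rw [mtX]
  rw [if_neg (by omega), if_pos h1, h1]

lemma mtX_mem (hn : 3 ≤ n) (z : ℕ → X) (i : ℕ) (hi : i ≤ n - 1) :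
    mtX n U z i ∈ U i := by
  match i with
  | 0 => rw [mtX_zero]; exact pr_mem _ _
  | (j + 1) =>
    rcases Nat.lt_or_ge (j + 1) (n - 1) with h | h
    · rw [mtX_mid n U z j (by omega)]; exact pr_mem _ _
    · have h1 : j + 1 = n - 1 := by omega
      rw [mtX_last' n U hn z j h1]
      exact pr_mem _ _

end MT

section MT2
variable (n : ℕ) (U : ℕ → Submodule ℝ X) [∀ i, (U i).HasOrthogonalProjection]

lemma step_zero (U' : Submodule ℝ X) [U'.HasOrthogonalProjection] (b : X) :
    ‖b - pr U' b‖ ^ 2 + ‖pr U' b‖ ^ 2 = ‖b‖ ^ 2 := by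
  have h := proj_pyth U' b b
  rw [show b - (b - pr U' b) = pr U' b by abel, sub_self] at h
  simp only [norm_zero] at h
  linarith

lemma step_mid (U' : Submodule ℝ X) [U'.HasOrthogonalProjection] (a b c : X) :
    ‖b + (pr U' (a + c - b) - a)‖ ^ 2 + ‖c - pr U' (a + c - b)‖ ^ 2
      = ‖c‖ ^ 2 + ‖b - a‖ ^ 2 := by
  rw [show b + (pr U' (a + c - b) - a) = c - ((a + c - b) - pr U' (a + c - b)) by abel]
  rw [show (b : X) - a = c - (a + c - b) by abel]
  exact proj_pyth U' (a + c - b) c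

lemma step_last (U' : Submodule ℝ X) [U'.HasOrthogonalProjection] (a b c : X) :
    ‖b + (pr U' (c + a - b) - a)‖ ^ 2 + ‖pr U' (c + a - b) - c‖ ^ 2
      = ‖c‖ ^ 2 + ‖b - a‖ ^ 2 := by
  rw [show b + (pr U' (c + a - b) - a) = c - ((c + a - b) - pr U' (c + a - b)) by abel]
  rw [show pr U' (c + a - b) - c = -(c - pr U' (c + a - b)) by abel, norm_neg]
  rw [show (b : X) - a = c - (c + a - b) by abel]
  exact proj_pyth U' (c + a - b) c

theorem mtT_norm_sq (hn : 3 ≤ n) (z : PiLp 2 (fun _ : Fin (n - 1) => X)) :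
    ‖mtT n U z‖ ^ 2 + ‖mtX n U (extz z) (n - 1) - mtX n U (extz z) 0‖ ^ 2 = ‖z‖ ^ 2 := by
  classical
  set z' := extz z with hz'
  set x := mtX n U z' with hx
  have hm2 : n - 2 + 1 = n - 1 := by omega
  have hcoordz : ∀ j : Fin (n - 1), z j = z' (j : ℕ) := by
    intro j
    rw [hz']
    simp [extz, j.isLt]
  have hcoord : ∀ j : Fin (n - 1), (mtT n U z) j = z' (j : ℕ) + (x ((j : ℕ) + 1) - x (j : ℕ)) := by
    intro j
    simp only [mtT, WithLp.equiv_symm_apply, PiLp.toLp_apply]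
    rw [hcoordz j]
  have h1 : ‖mtT n U z‖ ^ 2
      = ∑ j ∈ Finset.range (n - 1), ‖z' j + (x (j + 1) - x j)‖ ^ 2 := by
    rw [PiLp.norm_sq_eq_of_L2, ← Fin.sum_univ_eq_sum_range (fun j => ‖z' j + (x (j + 1) - x j)‖ ^ 2)]
    exact Finset.sum_congr rfl fun j _ => by rw [hcoord j]
  have h2 : ‖z‖ ^ 2 = ∑ j ∈ Finset.range (n - 1), ‖z' j‖ ^ 2 := by
    rw [PiLp.norm_sq_eq_of_L2, ← Fin.sum_univ_eq_sum_range (fun j => ‖z' j‖ ^ 2)]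
    exact Finset.sum_congr rfl fun j _ => by rw [hcoordz j]
  have hmid : ∀ j ∈ Finset.range (n - 2), ‖z' j + (x (j + 1) - x j)‖ ^ 2
      = ‖z' (j + 1)‖ ^ 2 + (‖z' j - x j‖ ^ 2 - ‖z' (j + 1) - x (j + 1)‖ ^ 2) := by
    intro j hj
    rw [Finset.mem_range] at hj
    rw [hx, mtX_mid n U z' j (by omega)]
    have := step_mid (U (j + 1)) (mtX n U z' j) (z' j) (z' (j + 1))
    linarith
  have hsum1 : ∑ j ∈ Finset.range (n - 2), ‖z' j + (x (j + 1) - x j)‖ ^ 2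
      = (∑ j ∈ Finset.range (n - 2), ‖z' (j + 1)‖ ^ 2)
        + (‖z' 0 - x 0‖ ^ 2 - ‖z' (n - 2) - x (n - 2)‖ ^ 2) := by
    rw [Finset.sum_congr rfl hmid, Finset.sum_add_distrib,
      Finset.sum_range_sub' (fun j => ‖z' j - x j‖ ^ 2)]
  have hlast : ‖z' (n - 2) + (x (n - 2 + 1) - x (n - 2))‖ ^ 2
      = ‖x 0‖ ^ 2 + ‖z' (n - 2) - x (n - 2)‖ ^ 2 - ‖x (n - 2 + 1) - x 0‖ ^ 2 := by
    rw [hx, mtX_last' n U hn z' (n - 2) hm2]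
    have := step_last (U (n - 2 + 1)) (mtX n U z' (n - 2)) (z' (n - 2)) (mtX n U z' 0)
    linarith
  have hsplitF : ∑ j ∈ Finset.range (n - 1), ‖z' j + (x (j + 1) - x j)‖ ^ 2
      = (∑ j ∈ Finset.range (n - 2), ‖z' j + (x (j + 1) - x j)‖ ^ 2)
        + ‖z' (n - 2) + (x (n - 2 + 1) - x (n - 2))‖ ^ 2 := by
    rw [← hm2, Finset.sum_range_succ]
  have hsplitZ : ∑ j ∈ Finset.range (n - 1), ‖z' j‖ ^ 2
      = (∑ j ∈ Finset.range (n - 2), ‖z' (j + 1)‖ ^ 2) + ‖z' 0‖ ^ 2 := by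
    rw [← hm2, Finset.sum_range_succ']
  have hx0 : x 0 = pr (U 0) (z' 0) := by rw [hx, mtX_zero]
  have c0 : ‖z' 0 - x 0‖ ^ 2 + ‖x 0‖ ^ 2 = ‖z' 0‖ ^ 2 := by
    rw [hx0]; exact step_zero (U 0) (z' 0)
  have hxx : x (n - 1) = x (n - 2 + 1) := by rw [hm2]
  rw [h1, h2, hxx]
  linarith

end MT2

section MT3
variable (n : ℕ) (U : ℕ → Submodule ℝ X) [∀ i, (U i).HasOrthogonalProjection]

lemma pr_add (U' : Submodule ℝ X) [U'.HasOrthogonalProjection] (a b : X) :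
    pr U' (a + b) = pr U' a + pr U' b := by
  simp [pr, map_add]

lemma pr_smul (U' : Submodule ℝ X) [U'.HasOrthogonalProjection] (c : ℝ) (a : X) :
    pr U' (c • a) = c • pr U' a := by
  simp [pr, map_smul]

lemma mtX_add (z w : ℕ → X) (i : ℕ) :
    mtX n U (z + w) i = mtX n U z i + mtX n U w i := by
  induction i with
  | zero => rw [mtX_zero, mtX_zero, mtX_zero, Pi.add_apply, pr_add]
  | succ i ih =>
    have h0 : mtX n U (z + w) 0 = mtX n U z 0 + mtX n U w 0 := by
      rw [mtX_zero, mtX_zero, mtX_zero, Pi.add_apply, pr_add]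
    simp only [mtX]
    split_ifs with hc1 hc2
    · rw [ih, Pi.add_apply, Pi.add_apply, ← pr_add]
      congr 1
      abel
    · rw [show (z + w) 0 = z 0 + w 0 from rfl, show (z + w) i = z i + w i from rfl, ih]
      conv_rhs => rw [← pr_add]
      congr 1
      rw [pr_add]
      abel
    · simp
  
lemma mtX_smul (c : ℝ) (z : ℕ → X) (i : ℕ) :
    mtX n U (c • z) i = c • mtX n U z i := by
  induction i with
  | zero => rw [mtX_zero, mtX_zero, Pi.smul_apply, pr_smul]
  | succ i ih =>
    have h0 : mtX n U (c • z) 0 = c • mtX n U z 0 := by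
      rw [mtX_zero, mtX_zero, Pi.smul_apply, pr_smul]
    simp only [mtX]
    split_ifs with hc1 hc2
    · rw [ih, Pi.smul_apply, Pi.smul_apply, ← pr_smul]
      congr 1
      simp [smul_sub, smul_add]
    · rw [show (c • z) 0 = c • z 0 from rfl, show (c • z) i = c • z i from rfl, ih]
      conv_rhs => rw [← pr_smul]
      congr 1
      rw [pr_smul]
      module
    · simp

lemma extz_add (z w : PiLp 2 (fun _ : Fin (n - 1) => X)) :
    extz (z + w) = extz z + extz w := by
  funext i
  simp only [extz, Pi.add_apply]
  split_ifs with h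
  · rfl
  · simp

lemma extz_smul (c : ℝ) (z : PiLp 2 (fun _ : Fin (n - 1) => X)) :
    extz (c • z) = c • extz z := by
  funext i
  simp only [extz, Pi.smul_apply]
  split_ifs with h
  · rfl
  · simp

/-- The Malitsky–Tam operator as a continuous linear map. -/
noncomputable def mtTC (hn : 3 ≤ n) :
    PiLp 2 (fun _ : Fin (n - 1) => X) →L[ℝ] PiLp 2 (fun _ : Fin (n - 1) => X) :=
  LinearMap.mkContinuousOfExistsBound
    { toFun := mtT n U
      map_add' := by
        intro z w
        refine PiLp.ext fun j => ?_
        show (mtT n U (z + w)) j = (mtT n U z) j + (mtT n U w) j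
        simp only [mtT, WithLp.equiv_symm_apply, PiLp.toLp_apply, extz_add, mtX_add]
        rw [show (z + w) j = z j + w j from rfl]
        abel
      map_smul' := by
        intro c z
        refine PiLp.ext fun j => ?_
        show (mtT n U (c • z)) j = c • (mtT n U z) j
        simp only [mtT, WithLp.equiv_symm_apply, PiLp.toLp_apply, extz_smul, mtX_smul, RingHom.id_apply]
        rw [show (c • z) j = c • z j from rfl]
        module }
    ⟨1, by
      intro z
      have := mtT_norm_sq n U hn z
      have h2 : ‖mtT n U z‖ ^ 2 ≤ ‖z‖ ^ 2 := by nlinarith [sq_nonneg ‖mtX n U (extz z) (n - 1) - mtX n U (extz z) 0‖]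
      simp only [one_mul, LinearMap.coe_mk, AddHom.coe_mk]
      nlinarith [norm_nonneg (mtT n U z), norm_nonneg z]⟩

lemma mtTC_apply (hn : 3 ≤ n) (z : PiLp 2 (fun _ : Fin (n - 1) => X)) :
    mtTC n U hn z = mtT n U z := rfl

lemma mtTC_norm_le (hn : 3 ≤ n) (z : PiLp 2 (fun _ : Fin (n - 1) => X)) :
    ‖mtTC n U hn z‖ ≤ ‖z‖ := by
  rw [mtTC_apply]
  have := mtT_norm_sq n U hn z
  have h2 : ‖mtT n U z‖ ^ 2 ≤ ‖z‖ ^ 2 := by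
    nlinarith [sq_nonneg ‖mtX n U (extz z) (n - 1) - mtX n U (extz z) 0‖]
  nlinarith [norm_nonneg (mtT n U z), norm_nonneg z]

end MT3

section MT4
variable (n : ℕ) (U : ℕ → Submodule ℝ X) [∀ i, (U i).HasOrthogonalProjection]

lemma pr_self (U' : Submodule ℝ X) [U'.HasOrthogonalProjection] {v : X} (hv : v ∈ U') :
    pr U' v = v := Submodule.starProjection_eq_self_iff.2 hv

lemma Z_le (hn : 3 ≤ n) (k : ℕ) (hk : k ≤ n - 1) : (⨅ i : Fin n, U (i : ℕ)) ≤ U k := by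
  have := iInf_le (fun i : Fin n => U (i : ℕ)) ⟨k, by omega⟩
  simpa using this

lemma mtT_coord (z : PiLp 2 (fun _ : Fin (n - 1) => X)) (j : Fin (n - 1)) :
    (mtT n U z) j = z j + (mtX n U (extz z) ((j : ℕ) + 1) - mtX n U (extz z) (j : ℕ)) := by
  simp only [mtT, WithLp.equiv_symm_apply, PiLp.toLp_apply]

lemma fix_xconst (y : PiLp 2 (fun _ : Fin (n - 1) => X)) (hfix : mtT n U y = y) :
    ∀ i ≤ n - 1, mtX n U (extz y) i = mtX n U (extz y) 0 := by
  have hco : ∀ j : Fin (n - 1), mtX n U (extz y) ((j : ℕ) + 1) = mtX n U (extz y) (j : ℕ) := by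
    intro j
    have h := congrArg (fun v : PiLp 2 (fun _ : Fin (n - 1) => X) => v j) hfix
    simp only [mtT_coord] at h
    have : mtX n U (extz y) ((j : ℕ) + 1) - mtX n U (extz y) (j : ℕ) = 0 := by
      have := sub_eq_zero_of_eq h
      linear_combination (norm := abel) this
    linear_combination (norm := abel) this
  intro i hi
  induction i with
  | zero => rfl
  | succ i ih =>
    have hlt : i < n - 1 := by omega
    have := hco ⟨i, hlt⟩
    simp only [Fin.val_mk] at this
    rw [this]
    exact ih (by omega)

lemma fix_x0_mem (hn : 3 ≤ n) (y : PiLp 2 (fun _ : Fin (n - 1) => X)) (hfix : mtT n U y = y) :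
    mtX n U (extz y) 0 ∈ ⨅ i : Fin n, U (i : ℕ) := by
  rw [Submodule.mem_iInf]
  intro i
  have hi : (i : ℕ) ≤ n - 1 := by omega
  rw [← fix_xconst n U y hfix (i : ℕ) hi]
  exact mtX_mem n U hn (extz y) (i : ℕ) hi

lemma fix_coord_orth (hn : 3 ≤ n) (y : PiLp 2 (fun _ : Fin (n - 1) => X)) (hfix : mtT n U y = y) :
    ∀ j ≤ n - 2, extz y j - mtX n U (extz y) 0 ∈ (⨅ i : Fin n, U (i : ℕ))ᗮ := by
  intro j hj
  induction j with
  | zero =>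
    have h0 : extz y 0 - mtX n U (extz y) 0 ∈ (U 0)ᗮ := by
      rw [mtX_zero]
      exact sub_pr_mem_orth (U 0) _
    exact Submodule.orthogonal_le (Z_le n U hn 0 (by omega)) h0
  | succ j ih =>
    have e1 : mtX n U (extz y) j = mtX n U (extz y) 0 := fix_xconst n U y hfix j (by omega)
    have e2 : mtX n U (extz y) (j + 1) = mtX n U (extz y) 0 :=
      fix_xconst n U y hfix (j + 1) (by omega)
    have hm := mtX_mid n U (extz y) j (by omega)
    have h1 : (mtX n U (extz y) j + extz y (j + 1) - extz y j) - mtX n U (extz y) (j + 1)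
        ∈ (U (j + 1))ᗮ := by
      rw [hm]
      exact sub_pr_mem_orth (U (j + 1)) _
    have h1' := Submodule.orthogonal_le (Z_le n U hn (j + 1) (by omega)) h1
    have ih' := ih (by omega)
    have heq : extz y (j + 1) - mtX n U (extz y) 0
        = ((mtX n U (extz y) j + extz y (j + 1) - extz y j) - mtX n U (extz y) (j + 1))
          + (extz y j - mtX n U (extz y) 0) := by
      rw [e1, e2]
      abel
    rw [heq]
    exact add_mem h1' ih'

lemma mtX_diag (hn : 3 ≤ n) (x : X) (hx : x ∈ ⨅ i : Fin n, U (i : ℕ)) :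
    ∀ i ≤ n - 1, mtX n U (fun k => if k < n - 1 then x else 0) i = x := by
  have hxU : ∀ k ≤ n - 1, x ∈ U k := fun k hk => Z_le n U hn k hk hx
  intro i hi
  induction i with
  | zero =>
    rw [mtX_zero, if_pos (by omega)]
    exact pr_self (U 0) (hxU 0 (by omega))
  | succ i ih =>
    rcases Nat.lt_or_ge (i + 1) (n - 1) with h | h
    · rw [mtX_mid n U _ i (by omega), ih (by omega), if_pos (show i + 1 < n - 1 from h),
        if_pos (show i < n - 1 by omega)]
      rw [show x + x - x = x by abel]
      exact pr_self _ (hxU (i + 1) (by omega))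
    · have h1 : i + 1 = n - 1 := by omega
      rw [mtX_last' n U hn _ i h1, ih (by omega), if_pos (by omega)]
      have h0 : mtX n U (fun k => if k < n - 1 then x else 0) 0 = x := by
        rw [mtX_zero, if_pos (by omega)]
        exact pr_self (U 0) (hxU 0 (by omega))
      rw [h0, show x + x - x = x by abel]
      exact pr_self _ (hxU (i + 1) (by omega))

lemma diag_fixed (hn : 3 ≤ n) (x : X) (hx : x ∈ ⨅ i : Fin n, U (i : ℕ)) :
    mtT n U (WithLp.toLp 2 (fun _ => x) : PiLp 2 (fun _ : Fin (n - 1) => X))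
      = (WithLp.toLp 2 (fun _ => x) : PiLp 2 (fun _ : Fin (n - 1) => X)) := by
  have hext : extz (WithLp.toLp 2 (fun _ => x) : PiLp 2 (fun _ : Fin (n - 1) => X))
      = fun k => if k < n - 1 then x else 0 := by
    funext k
    simp only [extz]
    split_ifs with h <;> rfl
  refine PiLp.ext fun j => ?_
  rw [mtT_coord, hext, mtX_diag n U hn x hx ((j : ℕ) + 1) (by omega),
    mtX_diag n U hn x hx (j : ℕ) (by omega)]
  abel

end MT4


section MT5
variable (n : ℕ) (U : ℕ → Submodule ℝ X) [∀ i, (U i).HasOrthogonalProjection]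

lemma cast_n1 (hn : 3 ≤ n) : ((n - 1 : ℕ) : ℝ) = (n : ℝ) - 1 := by
  have h1 : 1 ≤ n := by omega
  push_cast [Nat.cast_sub h1]
  ring

lemma n1_ne (hn : 3 ≤ n) : ((n : ℝ) - 1) ≠ 0 := by
  have : (3 : ℝ) ≤ (n : ℝ) := by exact_mod_cast hn
  linarith

lemma fix_avg_orth (hn : 3 ≤ n) (y : PiLp 2 (fun _ : Fin (n - 1) => X))
    (hfix : mtT n U y = y) :
    ((n : ℝ) - 1)⁻¹ • (∑ j : Fin (n - 1), y j) - mtX n U (extz y) 0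
      ∈ (⨅ i : Fin n, U (i : ℕ))ᗮ := by
  have hsum : ∀ j : Fin (n - 1), y j - mtX n U (extz y) 0 ∈ (⨅ i : Fin n, U (i : ℕ))ᗮ := by
    intro j
    have h := fix_coord_orth n U hn y hfix (j : ℕ) (by omega)
    rwa [show extz y (j : ℕ) = y j from by simp [extz, j.isLt]] at h
  have hS : (∑ j : Fin (n - 1), (y j - mtX n U (extz y) 0)) ∈ (⨅ i : Fin n, U (i : ℕ))ᗮ :=
    sum_mem fun j _ => hsum j
  have hkey : ((n : ℝ) - 1)⁻¹ • (∑ j : Fin (n - 1), (y j - mtX n U (extz y) 0))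
      = ((n : ℝ) - 1)⁻¹ • (∑ j : Fin (n - 1), y j) - mtX n U (extz y) 0 := by
    rw [Finset.sum_sub_distrib, Finset.sum_const, Finset.card_univ, Fintype.card_fin, smul_sub]
    congr 1
    rw [← Nat.cast_smul_eq_nsmul ℝ, smul_smul, cast_n1 n hn, inv_mul_cancel₀ (n1_ne n hn),
      one_smul]
  rw [← hkey]
  exact Submodule.smul_mem _ _ hS

end MT5

instance piLp_completeSpace {m : ℕ} : CompleteSpace (PiLp 2 (fun _ : Fin m => X)) :=
  inferInstance

/-- for `n ≥ 3`, closed subspaces `U₀, …, U_{n−1}` with intersection `Z`, and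
`0 < λ < 1`, the relaxed Malitsky–Tam iteration `z_{k+1} = (1−λ) z_k + λ T z_k` converges
strongly to `P_{Fix T}(z₀)` (characterized by the nearest-point property), and
`P₀ ((z_k)₀) → P_Z ((z_{0,0} + ⋯ + z_{0,n−2})/(n−1))` strongly (`P_Z` applied to the average,
characterized by orthogonality).  In particular, if `z₀ = (x₀, …, x₀)` then
`P₀ ((z_k)₀) → P_Z x₀`. -/
theorem stmt18 (n : ℕ) (hn : 3 ≤ n) (U : ℕ → Submodule ℝ X) [∀ i, CompleteSpace (U i)]
    (lam : ℝ) (hlam0 : 0 < lam) (hlam1 : lam < 1)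
    (zseq : ℕ → PiLp 2 (fun _ : Fin (n - 1) => X))
    (hrec : ∀ k : ℕ, zseq (k + 1) = (1 - lam) • zseq k + lam • mtT n U (zseq k)) :
    (∀ f : PiLp 2 (fun _ : Fin (n - 1) => X),
      (f ∈ {y : PiLp 2 (fun _ : Fin (n - 1) => X) | mtT n U y = y} ∧
        ∀ q ∈ {y : PiLp 2 (fun _ : Fin (n - 1) => X) | mtT n U y = y},
          ‖zseq 0 - f‖ ≤ ‖zseq 0 - q‖) →
      Tendsto zseq atTop (nhds f)) ∧
    (∀ w : X,
      (w ∈ (⨅ i : Fin n, U (i : ℕ)) ∧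
        ((n : ℝ) - 1)⁻¹ • (∑ j : Fin (n - 1), zseq 0 j) - w ∈ (⨅ i : Fin n, U (i : ℕ))ᗮ) →
      Tendsto (fun k : ℕ => pr (U 0) (zseq k ⟨0, by omega⟩)) atTop (nhds w)) ∧
    (∀ x0 : X, (∀ j : Fin (n - 1), zseq 0 j = x0) →
      ∀ w : X,
        (w ∈ (⨅ i : Fin n, U (i : ℕ)) ∧ x0 - w ∈ (⨅ i : Fin n, U (i : ℕ))ᗮ) →
        Tendsto (fun k : ℕ => pr (U 0) (zseq k ⟨0, by omega⟩)) atTop (nhds w)) := by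
  classical
  set Z := (⨅ i : Fin n, U (i : ℕ)) with hZ
  set K : Submodule ℝ (PiLp 2 (fun _ : Fin (n - 1) => X)) :=
    LinearMap.ker ((ContinuousLinearMap.id ℝ (PiLp 2 (fun _ : Fin (n - 1) => X)) - mtTC n U hn :
      PiLp 2 (fun _ : Fin (n - 1) => X) →L[ℝ] PiLp 2 (fun _ : Fin (n - 1) => X)) :
      PiLp 2 (fun _ : Fin (n - 1) => X) →ₗ[ℝ] PiLp 2 (fun _ : Fin (n - 1) => X))
    with hKdef
  haveI hKproj : K.HasOrthogonalProjection := by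
    have hcl : IsClosed (K : Set (PiLp 2 (fun _ : Fin (n - 1) => X))) := by
      rw [hKdef]
      exact ContinuousLinearMap.isClosed_ker _
    haveI : CompleteSpace K := hcl.completeSpace_coe
    infer_instance
  have hKfix : ∀ y : PiLp 2 (fun _ : Fin (n - 1) => X), y ∈ K ↔ mtT n U y = y := by
    intro y
    rw [hKdef, LinearMap.mem_ker]
    constructor
    · intro h
      have h' : y - mtT n U y = 0 := by
        simpa [ContinuousLinearMap.sub_apply, mtTC_apply] using h
      have := sub_eq_zero.1 h'
      exact this.symm
    · intro h
      simp [ContinuousLinearMap.sub_apply, ContinuousLinearMap.id_apply, mtTC_apply, h,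
        sub_self]
  -- the iterates
  have hz : ∀ k, zseq k = (Tl (mtTC n U hn) lam ^ k) (zseq 0) := by
    intro k
    induction k with
    | zero => simp
    | succ k ih =>
      rw [hrec k, ih, pow_succ', ContinuousLinearMap.mul_apply, Tl_apply, mtTC_apply]
  set f₀ : PiLp 2 (fun _ : Fin (n - 1) => X) := (Submodule.orthogonalProjectionOnto K (zseq 0) :
    PiLp 2 (fun _ : Fin (n - 1) => X)) with hf₀
  have hconv : Tendsto zseq atTop (nhds f₀) := by
    have h := km_tendsto (mtTC n U hn) (mtTC_norm_le n U hn) hlam0 hlam1 (zseq 0) hKdef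
    exact h.congr fun k => (hz k).symm
  have hf₀K : f₀ ∈ K := (Submodule.orthogonalProjectionOnto K (zseq 0)).2
  have hfixf₀ : mtT n U f₀ = f₀ := (hKfix f₀).1 hf₀K
  set x0 : X := mtX n U (extz f₀) 0 with hx0
  have hx0Z : x0 ∈ Z := fix_x0_mem n U hn f₀ hfixf₀
  have hprf : pr (U 0) (f₀ ⟨0, by omega⟩) = x0 := by
    rw [hx0, mtX_zero]
    congr 1
    simp [extz, show 0 < n - 1 by omega]
  -- continuity of the projected first coordinate
  have hcont : Continuous (fun y : PiLp 2 (fun _ : Fin (n - 1) => X) =>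
      pr (U 0) (y ⟨0, by omega⟩)) := by
    have h1 : Continuous (fun y : PiLp 2 (fun _ : Fin (n - 1) => X) => y ⟨0, by omega⟩) :=
      (PiLp.proj (𝕜 := ℝ) 2 (fun _ : Fin (n - 1) => X) ⟨0, by omega⟩).continuous
    have h2 : Continuous (fun x : X => pr (U 0) x) :=
      continuous_subtype_val.comp (Submodule.orthogonalProjectionOnto (U 0)).continuous
    exact h2.comp h1
  have hconvpr : Tendsto (fun k : ℕ => pr (U 0) (zseq k ⟨0, by omega⟩)) atTop (nhds x0) := by
    rw [← hprf]
    exact ((hcont.tendsto f₀).comp hconv)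
  -- Part 2 (general form)
  have P2 : ∀ w : X,
      (w ∈ Z ∧ ((n : ℝ) - 1)⁻¹ • (∑ j : Fin (n - 1), zseq 0 j) - w ∈ Zᗮ) →
      Tendsto (fun k : ℕ => pr (U 0) (zseq k ⟨0, by omega⟩)) atTop (nhds w) := by
    rintro w ⟨hw1, hw2⟩
    have havgf : ((n : ℝ) - 1)⁻¹ • (∑ j : Fin (n - 1), f₀ j) - x0 ∈ Zᗮ :=
      fix_avg_orth n U hn f₀ hfixf₀
    have hsumZorth : (∑ j : Fin (n - 1), (zseq 0 j - f₀ j)) ∈ Zᗮ := by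
      rw [Submodule.mem_orthogonal]
      intro x hx
      let dx : PiLp 2 (fun _ : Fin (n - 1) => X) := WithLp.toLp 2 (fun _ => x)
      have hdiagK : dx ∈ K := (hKfix _).2 (diag_fixed n U hn x hx)
      have horthK : zseq 0 - f₀ ∈ Kᗮ := Submodule.sub_starProjection_mem_orthogonal _
      have h0 : (inner ℝ dx (zseq 0 - f₀) : ℝ) = 0 :=
        Submodule.inner_right_of_mem_orthogonal hdiagK horthK
      rw [PiLp.inner_apply] at h0
      rw [inner_sum]
      rw [← h0]
      exact Finset.sum_congr rfl fun j _ => rfl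
    have havgz : ((n : ℝ) - 1)⁻¹ • (∑ j : Fin (n - 1), zseq 0 j)
        - ((n : ℝ) - 1)⁻¹ • (∑ j : Fin (n - 1), f₀ j) ∈ Zᗮ := by
      rw [← smul_sub, ← Finset.sum_sub_distrib]
      exact Submodule.smul_mem _ _ hsumZorth
    have hfin : ((n : ℝ) - 1)⁻¹ • (∑ j : Fin (n - 1), zseq 0 j) - x0 ∈ Zᗮ := by
      have := add_mem havgz havgf
      rwa [show ((n : ℝ) - 1)⁻¹ • (∑ j : Fin (n - 1), zseq 0 j)
          - ((n : ℝ) - 1)⁻¹ • (∑ j : Fin (n - 1), f₀ j)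
          + (((n : ℝ) - 1)⁻¹ • (∑ j : Fin (n - 1), f₀ j) - x0)
          = ((n : ℝ) - 1)⁻¹ • (∑ j : Fin (n - 1), zseq 0 j) - x0 by abel] at this
    have hwx0 : w = x0 := by
      have hmem1 : w - x0 ∈ Z := sub_mem hw1 hx0Z
      have hmem2 : w - x0 ∈ Zᗮ := by
        have := sub_mem hfin hw2
        rwa [show ((n : ℝ) - 1)⁻¹ • (∑ j : Fin (n - 1), zseq 0 j) - x0
            - (((n : ℝ) - 1)⁻¹ • (∑ j : Fin (n - 1), zseq 0 j) - w) = w - x0 by abel] at this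
      have : w - x0 ∈ Z ⊓ Zᗮ := ⟨hmem1, hmem2⟩
      rw [Submodule.inf_orthogonal_eq_bot, Submodule.mem_bot] at this
      exact sub_eq_zero.1 this
    rw [hwx0]
    exact hconvpr
  refine ⟨?_, P2, ?_⟩
  · -- Part 1
    rintro f ⟨hf1, hf2⟩
    have hfK : f ∈ K := (hKfix f).2 hf1
    have hinf : ‖zseq 0 - f‖ = ⨅ w : K, ‖zseq 0 - w‖ := by
      apply le_antisymm
      · exact le_ciInf fun w => hf2 w ((hKfix w.1).1 w.2)
      · exact ciInf_le ⟨0, by rintro r ⟨w, rfl⟩; exact norm_nonneg _⟩ (⟨f, hfK⟩ : K)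
    have horth := (Submodule.norm_eq_iInf_iff_inner_eq_zero (𝕜 := ℝ) K hfK).1 hinf
    have heq : f₀ = f := Submodule.eq_starProjection_of_mem_of_inner_eq_zero hfK horth
    rw [← heq]
    exact hconv
  · -- Part 3
    rintro x0' hcoords w ⟨hw1, hw2⟩
    apply P2 w
    refine ⟨hw1, ?_⟩
    have hsum : (∑ j : Fin (n - 1), zseq 0 j) = (n - 1 : ℕ) • x0' := by
      rw [Finset.sum_congr rfl fun j _ => hcoords j, Finset.sum_const, Finset.card_univ,
        Fintype.card_fin]
    rw [hsum, ← Nat.cast_smul_eq_nsmul ℝ, smul_smul, cast_n1 n hn,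
      inv_mul_cancel₀ (n1_ne n hn), one_smul]
    exact hw2
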